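/- Let C be an n×n correlation matrix with mean correlation c, and suppose its largest eigenvalue λ₁ satisfies na ≤ λ₁ ≤ nb with a,b ≥ 0 and a+b > 1. Then the weight w₁ = ⟨v₁,δ_n⟩² of a normalized eigenvector v₁ for λ₁ satisfies w₁ ≥ (g_n(c)+a−1)/(b+a−1). -/

import Mathlib

open Matrix Finset in
theorem stmt_11 (n : ℕ) (hn : 2 ≤ n) (C : Matrix (Fin n) (Fin n) ℝ)
    (hpsd : C.PosSemidef) (hdiag : ∀ i, C i i = 1)
    (lam : Fin n → ℝ) (v : Fin n → (Fin n → ℝ))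
    (heig : ∀ j, C.mulVec (v j) = lam j • v j)
    (horth : ∀ j k, ∑ i, v j i * v k i = if j = k then (1 : ℝ) else 0)
    (i1 : Fin n) (hmax : ∀ j, lam j ≤ lam i1)
    (a b : ℝ) (ha : 0 ≤ a) (hb : 0 ≤ b) (hab : 1 < a + b)
    (hla : (n : ℝ) * a ≤ lam i1) (hlb : lam i1 ≤ (n : ℝ) * b) :
    (∑ i, v i1 i * (Real.sqrt n)⁻¹) ^ 2 ≥
      ((((n : ℝ) - 1) *
          ((2 / ((n : ℝ) * ((n : ℝ) - 1))) *
            ∑ i : Fin n, ∑ j ∈ Finset.univ.filter (fun j => j < i), C i j) + 1) / (n : ℝ)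
        + a - 1) / (b + a - 1) := by
  classical
  have hn0 : (0:ℝ) < n := by positivity
  have hn0' : (n:ℝ) ≠ 0 := ne_of_gt hn0
  have hn1 : (1:ℝ) < n := by exact_mod_cast hn
  have hsq : (Real.sqrt n)⁻¹ * (Real.sqrt n)⁻¹ = (n:ℝ)⁻¹ := by
    rw [← Real.sqrt_inv]
    exact Real.mul_self_sqrt (by positivity)
  set u : Fin n → ℝ := fun _ => (Real.sqrt n)⁻¹ with hu
  set V : Matrix (Fin n) (Fin n) ℝ := Matrix.of (fun i j => v j i) with hV
  have hVtV : Vᵀ * V = 1 := by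
    ext j k
    simp only [Matrix.mul_apply, Matrix.transpose_apply, hV, Matrix.of_apply,
      Matrix.one_apply]
    exact horth j k
  have hVVt : V * Vᵀ = 1 := mul_eq_one_comm.mp hVtV
  set D : Matrix (Fin n) (Fin n) ℝ := Matrix.diagonal lam with hD
  have hCV : C * V = V * D := by
    ext i j
    have h1 := congrFun (heig j) i
    simp only [Matrix.mulVec, dotProduct, Pi.smul_apply, smul_eq_mul] at h1
    simp only [Matrix.mul_apply, Matrix.transpose_apply, hV, Matrix.of_apply, hD,
      Matrix.diagonal_apply]
    rw [h1, Finset.sum_eq_single j]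
    · simp [mul_comm]
    · intro k _ hk; simp [hk]
    · simp
  have hC : C = V * D * Vᵀ := by
    calc C = C * (V * Vᵀ) := by rw [hVVt, Matrix.mul_one]
    _ = (C * V) * Vᵀ := by rw [Matrix.mul_assoc]
    _ = V * D * Vᵀ := by rw [hCV]
  have htr : ∑ j, lam j = (n : ℝ) := by
    have h1 : C.trace = ∑ j, lam j := by
      rw [hC, Matrix.trace_mul_comm, ← Matrix.mul_assoc, hVtV, Matrix.one_mul, hD,
        Matrix.trace_diagonal]
    have h2 : C.trace = (n : ℝ) := by
      simp [Matrix.trace, Matrix.diag, hdiag]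
    rw [← h1, h2]
  set y : Fin n → ℝ := Vᵀ.mulVec u with hy
  have hyj : ∀ j, y j = ∑ i, v j i * u i := by
    intro j
    simp [hy, Matrix.mulVec, dotProduct, hV]
  set w1 : ℝ := (y i1)^2 with hw1
  have huu : dotProduct u u = 1 := by
    simp only [dotProduct, hu, hsq, Finset.sum_const, Finset.card_univ,
      Fintype.card_fin, nsmul_eq_mul]
    field_simp
  have hnorm : ∑ j, (y j)^2 = 1 := by
    have h2 : dotProduct y y = 1 := by
      rw [hy, Matrix.dotProduct_mulVec, Matrix.vecMul_transpose, Matrix.mulVec_mulVec,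
        hVVt, Matrix.one_mulVec, huu]
    rw [show ∑ j, (y j)^2 = dotProduct y y from by simp [dotProduct, sq], h2]
  have hquad : dotProduct u (C.mulVec u) = ∑ j, lam j * (y j)^2 := by
    rw [hC, Matrix.mul_assoc, ← Matrix.mulVec_mulVec, Matrix.dotProduct_mulVec,
      ← Matrix.mulVec_transpose, ← Matrix.mulVec_mulVec, ← hy]
    simp only [hD, dotProduct, Matrix.mulVec_diagonal]
    exact Finset.sum_congr rfl (fun j _ => by ring)
  have hlam0 : ∀ j, 0 ≤ lam j := by
    intro j
    have h0 := hpsd.dotProduct_mulVec_nonneg (v j)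
    rw [heig j] at h0
    have h1 : dotProduct (star (v j)) (lam j • v j) = lam j := by
      simp only [dotProduct, Pi.smul_apply, smul_eq_mul, Pi.star_apply, star_trivial]
      calc ∑ i, v j i * (lam j * v j i) = lam j * ∑ i, v j i * v j i := by
            rw [Finset.mul_sum]; exact Finset.sum_congr rfl fun i _ => by ring
      _ = lam j := by rw [horth j j]; simp
    rwa [h1] at h0
  have hw10 : 0 ≤ w1 := sq_nonneg _
  have hw1le : w1 ≤ 1 := by
    have h := Finset.single_le_sum (f := fun j => (y j)^2) (fun j _ => sq_nonneg _)
      (Finset.mem_univ i1)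
    rw [hnorm] at h
    exact h
  have hrest : ∑ j ∈ Finset.univ.erase i1, (y j)^2 = 1 - w1 := by
    have h := Finset.add_sum_erase Finset.univ (fun j => (y j)^2) (Finset.mem_univ i1)
    rw [hnorm] at h
    linarith
  have hother : ∀ j ∈ Finset.univ.erase i1, lam j ≤ (n:ℝ) - lam i1 := by
    intro j hj
    have hjne : j ≠ i1 := Finset.ne_of_mem_erase hj
    have hpair : lam j + lam i1 ≤ ∑ k, lam k := by
      have h := Finset.sum_le_sum_of_subset_of_nonneg
        (Finset.subset_univ ({j, i1} : Finset (Fin n))) (fun k _ _ => hlam0 k)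
      rwa [Finset.sum_pair hjne] at h
    rw [htr] at hpair
    linarith
  have hmain : ∑ j, lam j * (y j)^2 ≤ (n:ℝ)*b*w1 + ((n:ℝ) - (n:ℝ)*a) * (1 - w1) := by
    rw [← Finset.add_sum_erase Finset.univ _ (Finset.mem_univ i1)]
    have h1 : lam i1 * (y i1)^2 ≤ (n:ℝ)*b*w1 :=
      mul_le_mul_of_nonneg_right hlb hw10
    have h2 : ∑ j ∈ Finset.univ.erase i1, lam j * (y j)^2
        ≤ ((n:ℝ) - (n:ℝ)*a) * (1 - w1) := by
      calc ∑ j ∈ Finset.univ.erase i1, lam j * (y j)^2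
          ≤ ∑ j ∈ Finset.univ.erase i1, ((n:ℝ) - (n:ℝ)*a) * (y j)^2 := by
            apply Finset.sum_le_sum
            intro j hj
            exact mul_le_mul_of_nonneg_right (by linarith [hother j hj]) (sq_nonneg _)
      _ = ((n:ℝ) - (n:ℝ)*a) * (1 - w1) := by rw [← Finset.mul_sum, hrest]
    linarith
  -- value of quadratic form
  set S : ℝ := ∑ i : Fin n, ∑ j ∈ Finset.univ.filter (fun j => j < i), C i j with hS
  have hsym : ∀ i j, C j i = C i j := by
    intro i j
    have h := hpsd.1.apply i j
    simpa using h
  have hswap : ∑ i : Fin n, ∑ j ∈ Finset.univ.filter (fun j => i < j), C i j = S := by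
    rw [Finset.sum_comm' (s := Finset.univ) (t := fun i => Finset.univ.filter (fun j => i < j)) (f := fun i j => C i j) (t' := Finset.univ) (s' := fun j => Finset.univ.filter (fun i => i < j))
      (by intro x z; simp)]
    rw [hS]
    exact Finset.sum_congr rfl fun i _ => Finset.sum_congr rfl fun j _ => hsym i j
  have hdouble : ∑ i : Fin n, ∑ j, C i j = (n:ℝ) + 2*S := by
    have hsplit : ∀ i : Fin n, ∑ j, C i j
        = (∑ j ∈ Finset.univ.filter (fun j => j < i), C i j) + 1
          + ∑ j ∈ Finset.univ.filter (fun j => i < j), C i j := by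
      intro i
      have e1 := Finset.sum_filter_add_sum_filter_not Finset.univ (fun j => j < i)
        (fun j => C i j)
      have e2 := Finset.sum_filter_add_sum_filter_not
        (Finset.univ.filter (fun j => ¬ j < i)) (fun j => j = i) (fun j => C i j)
      have h3 : (Finset.univ.filter (fun j => ¬ j < i)).filter (fun j => j = i)
          = {i} := by
        ext k
        simp only [Finset.mem_filter, Finset.mem_univ, true_and, Finset.mem_singleton]
        constructor
        · rintro ⟨_, h⟩; exact h
        · rintro rfl; exact ⟨lt_irrefl _, rfl⟩
      have h4 : (Finset.univ.filter (fun j => ¬ j < i)).filter (fun j => ¬ j = i)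
          = Finset.univ.filter (fun j => i < j) := by
        ext k
        simp only [Finset.mem_filter, Finset.mem_univ, true_and]
        constructor
        · rintro ⟨h1, h2⟩; exact lt_of_le_of_ne (not_lt.mp h1) (Ne.symm h2)
        · intro h; exact ⟨not_lt.mpr (le_of_lt h), ne_of_gt h⟩
      rw [h3, h4, Finset.sum_singleton, hdiag i] at e2
      rw [← e1, ← e2]
      ring
    rw [Finset.sum_congr rfl (fun i _ => hsplit i)]
    rw [Finset.sum_add_distrib, Finset.sum_add_distrib, hswap, ← hS]
    simp
    ring
  have hval : dotProduct u (C.mulVec u) = ((n:ℝ) + 2*S)/n := by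
    have h1 : dotProduct u (C.mulVec u)
        = ∑ i, ∑ j, C i j * ((Real.sqrt n)⁻¹ * (Real.sqrt n)⁻¹) := by
      simp only [dotProduct, Matrix.mulVec, hu, Finset.mul_sum]
      exact Finset.sum_congr rfl fun i _ => Finset.sum_congr rfl fun j _ => by ring
    rw [h1]
    simp only [hsq, ← Finset.sum_mul]
    rw [hdouble]
    field_simp
  -- final assembly
  have hkey : ((n:ℝ)+2*S)/n ≤ (n:ℝ)*b*w1 + ((n:ℝ)-(n:ℝ)*a)*(1-w1) := by
    rw [← hval, hquad]; exact hmain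
  have hkey2 : ((n:ℝ)+2*S)/n/n ≤ b*w1 + (1-a)*(1-w1) := by
    rw [div_le_iff₀ hn0]
    calc ((n:ℝ)+2*S)/n ≤ (n:ℝ)*b*w1 + ((n:ℝ)-(n:ℝ)*a)*(1-w1) := hkey
    _ = (b*w1 + (1-a)*(1-w1)) * n := by ring
  have hG : ((n:ℝ)-1)*((2/((n:ℝ)*((n:ℝ)-1)))*S)+1 = ((n:ℝ)+2*S)/n := by
    have hne : (n:ℝ) - 1 ≠ 0 := by linarith
    field_simp
    ring
  have hgoal : (∑ i, v i1 i * (Real.sqrt n)⁻¹) = y i1 := by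
    rw [hyj]
  rw [hgoal, ← hw1, ge_iff_le, hG,
    div_le_iff₀ (show (0:ℝ) < b + a - 1 by linarith)]
  nlinarith [hkey2, hw10, hw1le]
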